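/- arXiv:1805.04966 — 2 statements merged into one kernel-verified Lean document; each statement's English description precedes it below -/
import Mathlib

section
/- If G and H are connected graphs of orders n ≥ 2 and n' ≥ 3 respectively, then 𝔡(G □ H) ≥ 3, where G □ H is the Cartesian product of G and H. -/
open SimpleGraph Finset

/-- Distance from a vertex to a finite set of vertices:
`min_{w ∈ S} d(u, w)`. -/
noncomputable def setDist {V : Type*} (G : SimpleGraph V) (u : V) (S : Finset V) : ℕ :=
  sInf (G.dist u '' (S : Set V))

/-- The set `𝒟_G(x,y)` of vertices distinguishing `x` and `y`. -/
noncomputable def DG {V : Type*} (G : SimpleGraph V) [Fintype V] (x y : V) : Finset V :=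
  Finset.univ.filter fun z => G.dist z x ≠ G.dist z y

/-- `𝔡(G) = min_{x ≠ y} |𝒟_G(x,y)|`. -/
noncomputable def frakd {V : Type*} (G : SimpleGraph V) [Fintype V] : ℕ :=
  sInf {m | ∃ x y : V, x ≠ y ∧ (DG G x y).card = m}

/-- `𝔡*(G) = max_{x ≠ y} |𝒟_G(x,y)|`. -/
noncomputable def frakdStar {V : Type*} (G : SimpleGraph V) [Fintype V] : ℕ :=
  sSup {m | ∃ x y : V, x ≠ y ∧ (DG G x y).card = m}

/-- A partition of the vertex set is a `k`-partition generator if every pair of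
distinct vertices is distinguished by at least `k` parts. -/
noncomputable def IsKPartitionGenerator {V : Type*} (G : SimpleGraph V) [Fintype V]
    [DecidableEq V] (k : ℕ) (P : Finpartition (Finset.univ : Finset V)) : Prop :=
  ∀ u v : V, u ≠ v → k ≤ (P.parts.filter fun S => setDist G u S ≠ setDist G v S).card

/-- The `k`-partition dimension `pd_k(G)`. -/
noncomputable def pd {V : Type*} (G : SimpleGraph V) [Fintype V] [DecidableEq V] (k : ℕ) : ℕ :=
  sInf {m | ∃ P : Finpartition (Finset.univ : Finset V),
    IsKPartitionGenerator G k P ∧ P.parts.card = m}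

/-- A set of vertices is a `k`-metric generator if every pair of distinct
vertices is distinguished by at least `k` of its vertices. -/
def IsKMetricGenerator {V : Type*} (G : SimpleGraph V) [Fintype V] (k : ℕ) (W : Finset V) : Prop :=
  ∀ u v : V, u ≠ v → k ≤ (W.filter fun z => G.dist z u ≠ G.dist z v).card

/-- The `k`-metric dimension `dim_k(G)`. -/
noncomputable def metricDim {V : Type*} (G : SimpleGraph V) [Fintype V] (k : ℕ) : ℕ :=
  sInf {m | ∃ W : Finset V, IsKMetricGenerator G k W ∧ W.card = m}


private lemma boxProd_dist_aux' {α β : Type*} {G : SimpleGraph α} {H : SimpleGraph β}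
    (hG : G.Connected) (hH : H.Connected) :
    ∀ {x y : α × β} (w : (G □ H).Walk x y),
      G.dist x.1 y.1 + H.dist x.2 y.2 ≤ w.length := by
  intro x y w
  induction w with
  | nil => simp
  | @cons u v y h w ih =>
    rw [Walk.length_cons]
    rcases boxProd_adj.mp h with ⟨hA, he⟩ | ⟨hA, he⟩
    · have h1 : G.dist u.1 y.1 ≤ 1 + G.dist v.1 y.1 := by
        calc G.dist u.1 y.1 ≤ G.dist u.1 v.1 + G.dist v.1 y.1 := hG.dist_triangle
        _ ≤ 1 + G.dist v.1 y.1 := by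
            have : _ = 1 := SimpleGraph.dist_eq_one_iff_adj.mpr hA
            omega
      rw [he]
      omega
    · have h1 : H.dist u.2 y.2 ≤ 1 + H.dist v.2 y.2 := by
        calc H.dist u.2 y.2 ≤ H.dist u.2 v.2 + H.dist v.2 y.2 := hH.dist_triangle
        _ ≤ 1 + H.dist v.2 y.2 := by
            have : _ = 1 := SimpleGraph.dist_eq_one_iff_adj.mpr hA
            omega
      rw [he]
      omega

private lemma boxProd_dist' {α β : Type*} {G : SimpleGraph α} {H : SimpleGraph β}
    (hG : G.Connected) (hH : H.Connected) (x y : α × β) :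
    (G □ H).dist x y = G.dist x.1 y.1 + H.dist x.2 y.2 := by
  refine le_antisymm ?_ ?_
  · obtain ⟨p, hp⟩ := hG.exists_walk_length_eq_dist x.1 y.1
    obtain ⟨q, hq⟩ := hH.exists_walk_length_eq_dist x.2 y.2
    have := SimpleGraph.dist_le ((p.boxProdLeft H x.2).append (q.boxProdRight G y.1))
    have e1 : (p.boxProdLeft H x.2).length = p.length := Walk.length_map _ _
    have e2 : (q.boxProdRight G y.1).length = q.length := Walk.length_map _ _
    rw [Walk.length_append, e1, e2, hp, hq] at this
    exact this
  · obtain ⟨w, hw⟩ := (hG.boxProd hH).exists_walk_length_eq_dist x y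
    rw [← hw]
    exact boxProd_dist_aux' hG hH w

private lemma mem_DG_iff {V : Type*} (G : SimpleGraph V) [Fintype V] (x y z : V) :
    z ∈ DG G x y ↔ G.dist z x ≠ G.dist z y := by
  simp [DG]

private lemma three_le_card_DG {V W : Type*} [Fintype V] [DecidableEq V] [Fintype W]
    [DecidableEq W] {G : SimpleGraph V} {H : SimpleGraph W}
    (hG : G.Connected) (hH : H.Connected)
    (hn : 2 ≤ Fintype.card V) (hn' : 3 ≤ Fintype.card W)
    (x y : V × W) (hxy : x ≠ y) : 3 ≤ (DG (G □ H) x y).card := by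
  have hP : (G □ H).Connected := hG.boxProd hH
  have hd := boxProd_dist' hG hH
  have hxmem : x ∈ DG (G □ H) x y := by
    rw [mem_DG_iff]
    have h1 : (G □ H).dist x x = 0 := SimpleGraph.dist_self
    have h2 : 0 < (G □ H).dist x y := hP.pos_dist_of_ne hxy
    omega
  have hymem : y ∈ DG (G □ H) x y := by
    rw [mem_DG_iff]
    have h1 : (G □ H).dist y y = 0 := SimpleGraph.dist_self
    have h2 : 0 < (G □ H).dist y x := hP.pos_dist_of_ne (Ne.symm hxy)
    omega
  obtain ⟨z, hzmem, hzx, hzy⟩ :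
      ∃ z, z ∈ DG (G □ H) x y ∧ z ≠ x ∧ z ≠ y := by
    by_cases h1 : x.1 = y.1
    · -- then x.2 ≠ y.2
      have h2 : x.2 ≠ y.2 := fun h => hxy (Prod.ext h1 h)
      obtain ⟨a, ha⟩ := Fintype.exists_ne_of_one_lt_card (by omega) x.1
      refine ⟨(a, x.2), ?_, ?_, ?_⟩
      · rw [mem_DG_iff, hd, hd]
        have : 0 < H.dist x.2 y.2 := hH.pos_dist_of_ne h2
        simp only [← h1, SimpleGraph.dist_self]
        omega
      · exact fun h => ha (congrArg Prod.fst h)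
      · exact fun h => ha (h1 ▸ congrArg Prod.fst h)
    · by_cases h2 : x.2 = y.2
      · obtain ⟨b, hb⟩ := Fintype.exists_ne_of_one_lt_card (by omega) x.2
        refine ⟨(x.1, b), ?_, ?_, ?_⟩
        · rw [mem_DG_iff, hd, hd]
          have : 0 < G.dist x.1 y.1 := hG.pos_dist_of_ne h1
          simp only [← h2]
          simp only [SimpleGraph.dist_self]
          omega
        · exact fun h => hb (congrArg Prod.snd h)
        · exact fun h => hb (h2 ▸ congrArg Prod.snd h)
      · -- both coordinates differ
        obtain ⟨b, hbx, hby⟩ : ∃ b : W, b ≠ x.2 ∧ b ≠ y.2 := by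
          by_contra hcon
          push_neg at hcon
          have hsub : (Finset.univ : Finset W) ⊆ {x.2, y.2} := by
            intro b _
            rcases eq_or_ne b x.2 with h | h
            · simp [h]
            · simp [hcon b h]
          have := Finset.card_le_card hsub
          have h2 : ({x.2, y.2} : Finset W).card ≤ 2 :=
            (Finset.card_insert_le _ _).trans (by simp)
          simp only [Finset.card_univ] at this
          omega
        have htG : 0 < G.dist x.1 y.1 := hG.pos_dist_of_ne h1
        by_cases hz : (G □ H).dist (x.1, b) x ≠ (G □ H).dist (x.1, b) y
        · exact ⟨(x.1, b), (mem_DG_iff _ _ _ _).mpr hz, fun h => hbx (congrArg Prod.snd h),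
            fun h => hby (congrArg Prod.snd h)⟩
        · refine ⟨(y.1, b), ?_, fun h => hbx (congrArg Prod.snd h),
            fun h => hby (congrArg Prod.snd h)⟩
          rw [mem_DG_iff, hd, hd]
          push_neg at hz
          rw [hd, hd] at hz
          simp only [SimpleGraph.dist_self] at *
          have hc : G.dist y.1 x.1 = G.dist x.1 y.1 := SimpleGraph.dist_comm
          omega
  have hsub : ({x, y, z} : Finset (V × W)) ⊆ DG (G □ H) x y := by
    intro u hu
    simp only [Finset.mem_insert, Finset.mem_singleton] at hu
    rcases hu with rfl | rfl | rfl <;> assumption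
  have hcard : ({x, y, z} : Finset (V × W)).card = 3 := by
    rw [Finset.card_insert_of_notMem (by simp [hxy, Ne.symm hzx]),
      Finset.card_insert_of_notMem (by simp [Ne.symm hzy])]
    simp
  calc 3 = ({x, y, z} : Finset (V × W)).card := hcard.symm
  _ ≤ _ := Finset.card_le_card hsub

theorem stmt_9 {V W : Type*} [Fintype V] [DecidableEq V] [Fintype W] [DecidableEq W]
    (G : SimpleGraph V) (H : SimpleGraph W)
    (hG : G.Connected) (hH : H.Connected)
    (hn : 2 ≤ Fintype.card V) (hn' : 3 ≤ Fintype.card W) :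
    3 ≤ frakd (G □ H) := by
  have hcV : 1 < Fintype.card (V × W) := by
    rw [Fintype.card_prod]; nlinarith
  obtain ⟨x, y, hxy⟩ := Fintype.exists_pair_of_one_lt_card hcV
  refine le_csInf ⟨_, x, y, hxy, rfl⟩ ?_
  rintro m ⟨u, v, huv, rfl⟩
  exact three_le_card_DG hG hH hn hn' u v huv
end

section
/- If G is a connected graph of order n ≥ 2, then for any k with 1 ≤ k ≤ 𝔡(G) − 1, pd_k(G) ≤ dim_k(G) + 1. -/
open SimpleGraph Finset

lemma setDist_singleton {V : Type*} [DecidableEq V] (G : SimpleGraph V) (u w : V) :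
    setDist G u {w} = G.dist u w := by
  simp [setDist]

theorem stmt_13 {V : Type*} [Fintype V] [DecidableEq V] (G : SimpleGraph V)
    (hG : G.Connected) (hn : 2 ≤ Fintype.card V)
    (k : ℕ) (hk : 1 ≤ k) (hk' : k ≤ frakd G - 1) :
    pd G k ≤ metricDim G k + 1 := by
  -- every pair is distinguished by at least k vertices
  have hfrak : ∀ x y : V, x ≠ y → k ≤ (DG G x y).card := by
    intro x y hxy
    have h1 : frakd G ≤ (DG G x y).card := Nat.sInf_le ⟨x, y, hxy, rfl⟩
    omega
  have huniv : IsKMetricGenerator G k Finset.univ := by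
    intro u v huv
    simpa [DG] using hfrak u v huv
  have hset : metricDim G k ∈ {m | ∃ W : Finset V, IsKMetricGenerator G k W ∧ W.card = m} :=
    Nat.sInf_mem ⟨Fintype.card V, Finset.univ, huniv, by simp⟩
  obtain ⟨W, hW, hWcard⟩ := hset
  set parts0 : Finset (Finset V) :=
    insert (Finset.univ \ W) (W.image fun w => ({w} : Finset V)) with hparts0
  have hsupindep : parts0.SupIndep id := by
    rw [Finset.supIndep_iff_pairwiseDisjoint]
    intro a ha b hb hab
    simp only [hparts0, Finset.coe_insert, Set.mem_insert_iff, Finset.coe_image,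
      Set.mem_image, Finset.mem_coe] at ha hb
    rcases ha with rfl | ⟨w, hwW, rfl⟩ <;> rcases hb with rfl | ⟨x, hxW, rfl⟩
    · exact absurd rfl hab
    · simp only [Function.onFun, id_eq, Finset.disjoint_singleton_right, Finset.mem_sdiff]
      tauto
    · simp only [Function.onFun, id_eq, Finset.disjoint_singleton_left, Finset.mem_sdiff]
      tauto
    · simp only [Function.onFun, id_eq, Finset.disjoint_singleton_right, Finset.mem_singleton]
      intro h; exact hab (by rw [h])
  have hsup : parts0.sup id = Finset.univ := by
    rw [hparts0, Finset.sup_insert, Finset.sup_image]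
    have : W.sup ((id : Finset V → Finset V) ∘ fun w => ({w} : Finset V)) = W := by
      ext x; simp
    rw [this]
    ext x; simp [em]
  set P : Finpartition (Finset.univ : Finset V) := Finpartition.ofErase parts0 hsupindep hsup
    with hP
  have hPparts : P.parts = parts0.erase ⊥ := rfl
  have hgen : IsKPartitionGenerator G k P := by
    intro u v huv
    have hk2 := hW u v huv
    refine le_trans hk2 (Finset.card_le_card_of_injOn (fun w => ({w} : Finset V)) ?_ ?_)
    · intro w hw
      simp only [Finset.mem_coe, Finset.mem_filter] at hw ⊢
      constructor
      · rw [hPparts, Finset.mem_erase]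
        refine ⟨by simp [Finset.bot_eq_empty], ?_⟩
        exact Finset.mem_insert_of_mem (Finset.mem_image_of_mem _ hw.1)
      · rw [setDist_singleton, setDist_singleton]
        simpa [SimpleGraph.dist_comm] using hw.2
    · intro a _ b _ h
      exact Finset.singleton_injective h
  have hcard : P.parts.card ≤ W.card + 1 := by
    calc P.parts.card ≤ parts0.card := by rw [hPparts]; exact Finset.card_erase_le
      _ ≤ (W.image fun w => ({w} : Finset V)).card + 1 := Finset.card_insert_le _ _
      _ ≤ W.card + 1 := by gcongr; exact Finset.card_image_le
  have : pd G k ≤ P.parts.card := Nat.sInf_le ⟨P, hgen, rfl⟩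
  omega
end
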